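/- Let A be a commutative associative reduced algebra over a field of characteristic 0 equipped with an n-linear bracket satisfying the Leibniz rule in each argument and the Filippov identity. Then the bracket vanishes whenever two of its arguments are equal; in particular, the bracket is totally skew-symmetric (alternating). -/

import Mathlib

set_option linter.unusedSectionVars false
set_option maxHeartbeats 1000000

section NambuLodayAux

variable {K A : Type*} [Field K] [CharZero K] [CommRing A] [Algebra K A]
variable {n : ℕ} (br : MultilinearMap K (fun _ : Fin (n + 1) => A) A)

/-- Leibniz rule, commutative form. -/
private lemma nlLB
    (hLeib : ∀ (f : Fin (n + 1) → A) (i : Fin (n + 1)) (x y : A),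
      br (Function.update f i (x * y)) =
        x * br (Function.update f i y) + br (Function.update f i x) * y)
    (g : Fin (n + 1) → A) (i : Fin (n + 1)) (a b : A) :
    br (Function.update g i (a * b)) =
      a * br (Function.update g i b) + b * br (Function.update g i a) := by
  rw [hLeib g i a b]; ring

/-- A slot equal to `1` kills the bracket. -/
private lemma nlone
    (hLeib : ∀ (f : Fin (n + 1) → A) (i : Fin (n + 1)) (x y : A),
      br (Function.update f i (x * y)) =
        x * br (Function.update f i y) + br (Function.update f i x) * y)
    (g : Fin (n + 1) → A) (i : Fin (n + 1)) :
    br (Function.update g i (1 : A)) = 0 := by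
  have h := hLeib g i 1 1
  simp only [one_mul, mul_one] at h
  exact right_eq_add.mp h

/-- Shifting a slot by `1` does not change the bracket. -/
private lemma nlshift
    (hLeib : ∀ (f : Fin (n + 1) → A) (i : Fin (n + 1)) (x y : A),
      br (Function.update f i (x * y)) =
        x * br (Function.update f i y) + br (Function.update f i x) * y)
    (g : Fin (n + 1) → A) (i : Fin (n + 1)) :
    br (Function.update g i (g i + 1)) = br g := by
  rw [MultilinearMap.map_update_add, Function.update_eq_self, nlone br hLeib, add_zero]

/-- The diagonal consequence of the Filippov identity:
`∑_{k ≠ last} br (f[k := D (f k)]) = 0` where `D w = br (f[last := w])`. -/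
private lemma nlS1
    (hFil : ∀ (f g : Fin (n + 1) → A),
      br (Function.update f (Fin.last n) (br g)) =
        ∑ k : Fin (n + 1),
          br (Function.update g k (br (Function.update f (Fin.last n) (g k)))))
    (f : Fin (n + 1) → A) :
    ∑ k ∈ Finset.univ.erase (Fin.last n),
          br (Function.update f k (br (Function.update f (Fin.last n) (f k)))) = 0 := by
  have h := hFil f f
  rw [← Finset.sum_erase_add Finset.univ _ (Finset.mem_univ (Fin.last n))] at h
  rw [Function.update_eq_self] at h
  exact right_eq_add.mp h

/-- The squared-entry identity obtained from `nlS1` applied to `f[j := (f j)²]`. -/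
private lemma nlII
    (hLeib : ∀ (f : Fin (n + 1) → A) (i : Fin (n + 1)) (x y : A),
      br (Function.update f i (x * y)) =
        x * br (Function.update f i y) + br (Function.update f i x) * y)
    (hFil : ∀ (f g : Fin (n + 1) → A),
      br (Function.update f (Fin.last n) (br g)) =
        ∑ k : Fin (n + 1),
          br (Function.update g k (br (Function.update f (Fin.last n) (g k)))))
    (f : Fin (n + 1) → A) (j : Fin (n + 1)) (hj : j ≠ Fin.last n) :
    4 * (f j * ∑ k ∈ (Finset.univ.erase (Fin.last n)).erase j,
          br (Function.update f (Fin.last n) (f k)) * br (Function.update f k (f j)))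
      + 8 * (f j * (br (Function.update f (Fin.last n) (f j)) * br f)) = 0 := by
  classical
  have hup : ∀ (k : Fin (n + 1)), j ≠ k → ∀ v : A,
      br (Function.update (Function.update f j (f j * f j)) k v)
        = f j * br (Function.update f k v) + f j * br (Function.update f k v) := by
    intro k hjk v
    rw [Function.update_comm hjk, nlLB br hLeib]
    have hcol : Function.update (Function.update f k v) j (f j)
        = Function.update f k v := by
      conv_lhs => rw [show f j = (Function.update f k v) j from
        (Function.update_of_ne hjk v f).symm]
      rw [Function.update_eq_self]
    rw [hcol]
  have hjmem : j ∈ Finset.univ.erase (Fin.last n) :=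
    Finset.mem_erase.mpr ⟨hj, Finset.mem_univ j⟩
  have hS1f := nlS1 br hFil f
  have hS1f' := nlS1 br hFil (Function.update f j (f j * f j))
  rw [← Finset.sum_erase_add _ _ hjmem] at hS1f hS1f'
  have hTj : br (Function.update (Function.update f j (f j * f j)) j
        (br (Function.update (Function.update f j (f j * f j)) (Fin.last n)
          (Function.update f j (f j * f j) j))))
      = 4 * (f j * f j) * br (Function.update f j (br (Function.update f (Fin.last n) (f j))))
        + 8 * (f j * (br (Function.update f (Fin.last n) (f j)) * br f)) := by
    rw [Function.update_idem, Function.update_self, hup (Fin.last n) hj,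
      nlLB br hLeib f (Fin.last n) (f j) (f j)]
    simp only [MultilinearMap.map_update_add, nlLB br hLeib, Function.update_eq_self]
    ring
  have hTk : ∀ k ∈ (Finset.univ.erase (Fin.last n)).erase j,
      br (Function.update (Function.update f j (f j * f j)) k
        (br (Function.update (Function.update f j (f j * f j)) (Fin.last n)
          (Function.update f j (f j * f j) k))))
      = (4 * (f j * f j)) * br (Function.update f k (br (Function.update f (Fin.last n) (f k))))
        + (4 * f j) * (br (Function.update f (Fin.last n) (f k))
            * br (Function.update f k (f j))) := by
    intro k hk
    obtain ⟨hkj, hkmem⟩ := Finset.mem_erase.mp hk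
    rw [Function.update_of_ne hkj, hup (Fin.last n) hj (f k), hup k (Ne.symm hkj)]
    simp only [MultilinearMap.map_update_add, nlLB br hLeib, Function.update_eq_self]
    ring
  rw [Finset.sum_congr rfl hTk, hTj, Finset.sum_add_distrib, ← Finset.mul_sum,
    ← Finset.mul_sum] at hS1f'
  linear_combination hS1f' - (4 * (f j * f j)) * hS1f

/-- The shifted version of `nlII`, with the slot multiplier removed. -/
private lemma nlIII
    (hLeib : ∀ (f : Fin (n + 1) → A) (i : Fin (n + 1)) (x y : A),
      br (Function.update f i (x * y)) =
        x * br (Function.update f i y) + br (Function.update f i x) * y)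
    (hFil : ∀ (f g : Fin (n + 1) → A),
      br (Function.update f (Fin.last n) (br g)) =
        ∑ k : Fin (n + 1),
          br (Function.update g k (br (Function.update f (Fin.last n) (g k)))))
    (f : Fin (n + 1) → A) (j : Fin (n + 1)) (hj : j ≠ Fin.last n) :
    4 * (∑ k ∈ (Finset.univ.erase (Fin.last n)).erase j,
          br (Function.update f (Fin.last n) (f k)) * br (Function.update f k (f j)))
      + 8 * (br (Function.update f (Fin.last n) (f j)) * br f) = 0 := by
  classical
  have h1 := nlII br hLeib hFil f j hj
  have h2 := nlII br hLeib hFil (Function.update f j (f j + 1)) j hj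
  have hbL : ∀ w : A, br (Function.update (Function.update f j (f j + 1)) (Fin.last n) w)
      = br (Function.update f (Fin.last n) w) := by
    intro w
    rw [Function.update_comm hj]
    have h0 : Function.update f (Fin.last n) w j = f j :=
      Function.update_of_ne hj w f
    calc br (Function.update (Function.update f (Fin.last n) w) j (f j + 1))
        = br (Function.update (Function.update f (Fin.last n) w) j
            ((Function.update f (Fin.last n) w) j + 1)) := by rw [h0]
      _ = br (Function.update f (Fin.last n) w) := nlshift br hLeib _ j
  have hbrg : br (Function.update f j (f j + 1)) = br f := nlshift br hLeib f j
  have hgj : Function.update f j (f j + 1) j = f j + 1 := Function.update_self j _ f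
  rw [hgj] at h2
  have hsum : (∑ k ∈ (Finset.univ.erase (Fin.last n)).erase j,
        br (Function.update (Function.update f j (f j + 1)) (Fin.last n)
            (Function.update f j (f j + 1) k))
          * br (Function.update (Function.update f j (f j + 1)) k (f j + 1)))
      = ∑ k ∈ (Finset.univ.erase (Fin.last n)).erase j,
          br (Function.update f (Fin.last n) (f k)) * br (Function.update f k (f j)) := by
    refine Finset.sum_congr rfl (fun k hk => ?_)
    obtain ⟨hkj, hkmem⟩ := Finset.mem_erase.mp hk
    have hgk : Function.update f j (f j + 1) k = f k := Function.update_of_ne hkj _ f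
    rw [hgk, hbL]
    congr 1
    rw [MultilinearMap.map_update_add, nlone br hLeib, add_zero,
      Function.update_comm (Ne.symm hkj)]
    have h0 : Function.update f k (f j) j = f j := Function.update_of_ne (Ne.symm hkj) _ f
    calc br (Function.update (Function.update f k (f j)) j (f j + 1))
        = br (Function.update (Function.update f k (f j)) j
            ((Function.update f k (f j)) j + 1)) := by rw [h0]
      _ = br (Function.update f k (f j)) := nlshift br hLeib _ j
  have hDa : br (Function.update (Function.update f j (f j + 1)) (Fin.last n) (f j + 1))
      = br (Function.update f (Fin.last n) (f j)) := by
    rw [MultilinearMap.map_update_add, hbL, hbL, nlone br hLeib, add_zero]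
  rw [hsum, hDa, hbrg] at h2
  linear_combination h2 - h1

end NambuLodayAux

section NambuLodayMain

variable {K A : Type*} [Field K] [CharZero K] [CommRing A] [Algebra K A] [IsReduced A]
variable {n : ℕ} (br : MultilinearMap K (fun _ : Fin (n + 1) => A) A)

/-- The core step: if all brackets with an extra repeated value inserted vanish, then a
bracket with a value repeated in a non-last and the last slot vanishes. -/
private lemma nlCORE
    (hLeib : ∀ (f : Fin (n + 1) → A) (i : Fin (n + 1)) (x y : A),
      br (Function.update f i (x * y)) =
        x * br (Function.update f i y) + br (Function.update f i x) * y)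
    (hFil : ∀ (f g : Fin (n + 1) → A),
      br (Function.update f (Fin.last n) (br g)) =
        ∑ k : Fin (n + 1),
          br (Function.update g k (br (Function.update f (Fin.last n) (g k)))))
    (f : Fin (n + 1) → A) (u : A) (j : Fin (n + 1)) (hj : j ≠ Fin.last n)
    (hfL : f (Fin.last n) = u) (hfj : f j = u)
    (hbad : ∀ k, k ≠ Fin.last n → k ≠ j → f k ≠ u → br (Function.update f k u) = 0) :
    br f = 0 := by
  classical
  have h3 := nlIII br hLeib hFil f j hj
  have hDa : br (Function.update f (Fin.last n) (f j)) = br f := by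
    rw [hfj, ← hfL, Function.update_eq_self]
  have hterm : ∀ k ∈ (Finset.univ.erase (Fin.last n)).erase j,
      br (Function.update f (Fin.last n) (f k)) * br (Function.update f k (f j))
        = if f k = u then br f * br f else 0 := by
    intro k hk
    obtain ⟨hkj, hkmem⟩ := Finset.mem_erase.mp hk
    have hkL : k ≠ Fin.last n := (Finset.mem_erase.mp hkmem).1
    by_cases hku : f k = u
    · rw [if_pos hku]
      have e1 : br (Function.update f (Fin.last n) (f k)) = br f := by
        rw [hku, ← hfL, Function.update_eq_self]
      have e2 : br (Function.update f k (f j)) = br f := by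
        rw [hfj, ← hku, Function.update_eq_self]
      rw [e1, e2]
    · rw [if_neg hku, hfj, hbad k hkL hkj hku, mul_zero]
  rw [Finset.sum_congr rfl hterm, ← Finset.sum_filter, Finset.sum_const, hDa] at h3
  set c := (((Finset.univ.erase (Fin.last n)).erase j).filter (fun k => f k = u)).card with hc
  have hA : ((4 * c + 8 : ℕ) : A) * (br f * br f) = 0 := by
    rw [nsmul_eq_mul] at h3
    push_cast
    linear_combination h3
  have hK : ((4 * c + 8 : ℕ) : K) • (br f * br f) = 0 := by
    rw [Algebra.smul_def, map_natCast]
    exact hA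
  have hne : ((4 * c + 8 : ℕ) : K) ≠ 0 := Nat.cast_ne_zero.mpr (by omega)
  have hz2 : br f * br f = 0 := by
    have h := congrArg (fun t => ((4 * c + 8 : ℕ) : K)⁻¹ • t) hK
    simp only [smul_smul, inv_mul_cancel₀ hne, one_smul, smul_zero] at h
    exact h
  exact IsNilpotent.eq_zero ⟨2, by rw [pow_two]; exact hz2⟩

/-- Downward induction on the number of slots not equal to the repeated value. -/
private lemma nlKEY
    (hLeib : ∀ (f : Fin (n + 1) → A) (i : Fin (n + 1)) (x y : A),
      br (Function.update f i (x * y)) =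
        x * br (Function.update f i y) + br (Function.update f i x) * y)
    (hFil : ∀ (f g : Fin (n + 1) → A),
      br (Function.update f (Fin.last n) (br g)) =
        ∑ k : Fin (n + 1),
          br (Function.update g k (br (Function.update f (Fin.last n) (g k))))) :
    ∀ (m : ℕ) (f : Fin (n + 1) → A) (u : A) (s : Finset (Fin (n + 1))),
    f (Fin.last n) = u → (∀ k ∈ s, k ≠ Fin.last n ∧ f k = u) → s.Nonempty →
    n ≤ m + s.card → br f = 0 := by
  classical
  intro m
  induction m with
  | zero =>
    intro f u s hfL hs hne hcard
    obtain ⟨j, hjs⟩ := hne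
    have hsub : s ⊆ Finset.univ.erase (Fin.last n) := fun k hk =>
      Finset.mem_erase.mpr ⟨(hs k hk).1, Finset.mem_univ k⟩
    have hcard' : (Finset.univ.erase (Fin.last n)).card ≤ s.card := by
      rw [Finset.card_erase_of_mem (Finset.mem_univ _), Finset.card_univ, Fintype.card_fin]
      simpa using hcard
    have hseq : s = Finset.univ.erase (Fin.last n) :=
      Finset.eq_of_subset_of_card_le hsub hcard'
    refine nlCORE br hLeib hFil f u j (hs j hjs).1 hfL (hs j hjs).2 (fun k hkL hkj hku => ?_)
    exact absurd ((hs k (by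
      rw [hseq]; exact Finset.mem_erase.mpr ⟨hkL, Finset.mem_univ k⟩)).2) hku
  | succ m ih =>
    intro f u s hfL hs hne hcard
    obtain ⟨j, hjs⟩ := hne
    refine nlCORE br hLeib hFil f u j (hs j hjs).1 hfL (hs j hjs).2 (fun k hkL hkj hku => ?_)
    have hknot : k ∉ s := fun h => hku (hs k h).2
    refine ih (Function.update f k u) u (insert k s) ?_ ?_ ⟨k, Finset.mem_insert_self k s⟩ ?_
    · rw [Function.update_of_ne (Ne.symm hkL)]; exact hfL
    · intro k' hk'
      rcases Finset.mem_insert.mp hk' with rfl | h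
      · exact ⟨hkL, Function.update_self k' u f⟩
      · refine ⟨(hs k' h).1, ?_⟩
        have hne' : k' ≠ k := fun he => hku (he ▸ (hs k' h).2)
        rw [Function.update_of_ne hne']; exact (hs k' h).2
    · rw [Finset.card_insert_of_notMem hknot]; omega

end NambuLodayMain

/-- Main Theorem: A Nambu-Loday bracket (an `n`-linear bracket, here of
arity `n + 1`, satisfying the Leibniz rule in each argument and the Filippov identity) on
a commutative associative reduced algebra over a field of characteristic 0 vanishes
whenever two of its arguments are equal; in particular it is totally skew-symmetric. -/
theorem stmt7 {K A : Type*} [Field K] [CharZero K] [CommRing A] [Algebra K A] [IsReduced A]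
    (n : ℕ) (br : MultilinearMap K (fun _ : Fin (n + 1) => A) A)
    (hLeib : ∀ (f : Fin (n + 1) → A) (i : Fin (n + 1)) (x y : A),
      br (Function.update f i (x * y)) =
        x * br (Function.update f i y) + br (Function.update f i x) * y)
    (hFil : ∀ (f g : Fin (n + 1) → A),
      br (Function.update f (Fin.last n) (br g)) =
        ∑ k : Fin (n + 1),
          br (Function.update g k (br (Function.update f (Fin.last n) (g k))))) :
    (∀ (f : Fin (n + 1) → A) (i j : Fin (n + 1)), i ≠ j → f i = f j → br f = 0) ∧
      (∀ (f : Fin (n + 1) → A) (i j : Fin (n + 1)), i ≠ j →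
        br (f ∘ Equiv.swap i j) = - br f) := by
  classical
  have Q : ∀ (f : Fin (n + 1) → A) (i : Fin (n + 1)),
      i ≠ Fin.last n → f i = f (Fin.last n) → br f = 0 := by
    intro f i hi hfi
    refine nlKEY br hLeib hFil n f (f (Fin.last n)) {i} rfl ?_
      ⟨i, Finset.mem_singleton_self i⟩ ?_
    · intro k hk
      rw [Finset.mem_singleton] at hk
      subst hk; exact ⟨hi, hfi⟩
    · rw [Finset.card_singleton]; omega
  have ALT : ∀ (f : Fin (n + 1) → A) (i j : Fin (n + 1)), i ≠ j → f i = f j → br f = 0 := by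
    intro f i j hij hfij
    by_cases hjL : j = Fin.last n
    · subst hjL; exact Q f i hij hfij
    · by_cases hiL : i = Fin.last n
      · subst hiL
        exact Q f j hjL hfij.symm
      · have hg0 : br (Function.update (Function.update f i (f i + f (Fin.last n)))
            (Fin.last n) (f i + f (Fin.last n))) = 0 := by
          refine Q _ i hiL ?_
          simp [Function.update_apply, hiL]
        rw [MultilinearMap.map_update_add] at hg0
        have hcomm : ∀ v : A, Function.update (Function.update f i (f i + f (Fin.last n)))
              (Fin.last n) v
            = Function.update (Function.update f (Fin.last n) v) i (f i + f (Fin.last n)) :=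
          fun v => Function.update_comm hiL (f i + f (Fin.last n)) v f
        rw [hcomm, hcomm, MultilinearMap.map_update_add, MultilinearMap.map_update_add] at hg0
        have t1 : br (Function.update (Function.update f (Fin.last n) (f i)) i (f i)) = 0 := by
          have e : Function.update f (Fin.last n) (f i) i = f i :=
            Function.update_of_ne hiL _ f
          have hcol := Function.update_eq_self i (Function.update f (Fin.last n) (f i))
          rw [e] at hcol
          rw [hcol]
          refine Q _ j hjL ?_
          simp [Function.update_apply, hjL, Ne.symm hij, hfij.symm]
        have t2 : br (Function.update (Function.update f (Fin.last n) (f i)) i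
            (f (Fin.last n))) = 0 := by
          refine Q _ j hjL ?_
          simp [Function.update_apply, hjL, Ne.symm hij, Ne.symm hiL, hfij.symm]
        have t3 : br (Function.update (Function.update f (Fin.last n) (f (Fin.last n))) i
            (f i)) = br f := by
          rw [Function.update_eq_self, Function.update_eq_self]
        have t4 : br (Function.update (Function.update f (Fin.last n) (f (Fin.last n))) i
            (f (Fin.last n))) = 0 := by
          rw [Function.update_eq_self]
          refine Q _ i hiL ?_
          simp [Function.update_apply, hiL]
        rw [t1, t2, t3, t4] at hg0
        linear_combination hg0
  refine ⟨ALT, ?_⟩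
  intro f i j hij
  have hswap : f ∘ Equiv.swap i j = Function.update (Function.update f i (f j)) j (f i) := by
    funext k
    by_cases hki : k = i
    · subst hki
      simp [Equiv.swap_apply_left, Function.update_apply, hij]
    · by_cases hkj : k = j
      · subst hkj
        simp [Equiv.swap_apply_right, Function.update_apply]
      · simp [Equiv.swap_apply_of_ne_of_ne hki hkj, Function.update_apply, hki, hkj]
  have hg0 : br (Function.update (Function.update f i (f i + f j)) j (f i + f j)) = 0 := by
    refine ALT _ i j hij ?_
    simp [Function.update_apply, hij]
  rw [MultilinearMap.map_update_add] at hg0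
  have hcomm : ∀ v : A, Function.update (Function.update f i (f i + f j)) j v
      = Function.update (Function.update f j v) i (f i + f j) :=
    fun v => Function.update_comm hij (f i + f j) v f
  rw [hcomm, hcomm, MultilinearMap.map_update_add, MultilinearMap.map_update_add] at hg0
  have s1 : br (Function.update (Function.update f j (f i)) i (f i)) = 0 := by
    refine ALT _ i j hij ?_
    simp [Function.update_apply, hij, Ne.symm hij]
  have s2 : br (Function.update (Function.update f j (f i)) i (f j))
      = br (f ∘ Equiv.swap i j) := by
    rw [hswap, Function.update_comm hij]
  have s3 : br (Function.update (Function.update f j (f j)) i (f i)) = br f := by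
    rw [Function.update_eq_self, Function.update_eq_self]
  have s4 : br (Function.update (Function.update f j (f j)) i (f j)) = 0 := by
    rw [Function.update_eq_self]
    refine ALT _ i j hij ?_
    simp [Function.update_apply, Ne.symm hij]
  rw [s1, s2, s3, s4] at hg0
  linear_combination hg0
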